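/- Let n be even and f : Z_2^n → Z_4 given by f(x) = a_0(x) + 2a_1(x) for Boolean a_0, a_1. Then f is generalized bent (|H_f(ω)| = 2^{n/2} for all ω) if and only if both a_1 and a_1 ⊕ a_0 are bent Boolean functions. -/

import Mathlib

open Finset

def dotp {k : ℕ} (a b : Fin k → ZMod 2) : ZMod 2 := ∑ i, a i * b i

def walsh {n : ℕ} (f : (Fin n → ZMod 2) → ZMod 2) (ω : Fin n → ZMod 2) : ℤ :=
  ∑ x : Fin n → ZMod 2, (-1 : ℤ) ^ (f x + dotp ω x).val

def walsh2 {k m : ℕ} (f : (Fin k → ZMod 2) → (Fin m → ZMod 2) → ZMod 2)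
    (ω₁ : Fin k → ZMod 2) (ω₂ : Fin m → ZMod 2) : ℤ :=
  ∑ x : Fin k → ZMod 2, ∑ y : Fin m → ZMod 2,
    (-1 : ℤ) ^ (f x y + dotp ω₁ x + dotp ω₂ y).val


section Helpers
open Complex

lemma sum_decomp {n : ℕ} (a0 a1 : (Fin n → ZMod 2) → ZMod 2) (ω : Fin n → ZMod 2) :
    (∑ x : Fin n → ZMod 2,
        Complex.I ^ ((a0 x).val + 2 * (a1 x).val) * (-1 : ℂ) ^ (dotp ω x).val)
      = (1 + I)/2 * (walsh a1 ω : ℂ) + (1 - I)/2 * (walsh (fun x => a1 x + a0 x) ω : ℂ) := by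
  have key : ∀ u v w : ZMod 2,
      Complex.I ^ (u.val + 2 * v.val) * (-1 : ℂ) ^ w.val
        = (1 + I)/2 * (-1:ℂ) ^ ((v + w).val) + (1 - I)/2 * (-1:ℂ) ^ ((v + u + w).val) := by
    have h : ∀ z : ZMod 2, z = 0 ∨ z = 1 := by decide
    intro u v w
    rcases h u with rfl | rfl <;> rcases h v with rfl | rfl <;> rcases h w with rfl | rfl <;>
      simp only [add_zero, zero_add, show (1+1:ZMod 2) = 0 by decide,
        show (1+1+1:ZMod 2) = 1 by decide, ZMod.val_one, ZMod.val_zero] <;>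
      norm_num [pow_succ, Complex.ext_iff]
  unfold walsh
  push_cast
  rw [Finset.mul_sum, Finset.mul_sum, ← Finset.sum_add_distrib]
  refine Finset.sum_congr rfl fun x _ => ?_
  rw [key (a0 x) (a1 x) (dotp ω x),
    show a1 x + a0 x + dotp ω x = a1 x + (a0 x) + dotp ω x from by ring]

lemma abs_decomp (a b : ℝ) :
    ‖((1 + I)/2 * (a:ℂ) + (1 - I)/2 * (b:ℂ))‖ ^ 2 = (a^2 + b^2)/2 := by
  rw [Complex.sq_norm, Complex.normSq_apply]
  simp [Complex.add_re, Complex.add_im, Complex.mul_re, Complex.mul_im, Complex.div_re,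
    Complex.div_im, Complex.normSq_apply]
  ring

lemma main_equiv {n : ℕ} (k : ℕ) (a0 a1 : (Fin n → ZMod 2) → ZMod 2) (ω : Fin n → ZMod 2) :
    ‖(∑ x : Fin n → ZMod 2,
        Complex.I ^ ((a0 x).val + 2 * (a1 x).val) * (-1 : ℂ) ^ (dotp ω x).val)‖ = 2 ^ k
      ↔ (walsh a1 ω)^2 + (walsh (fun x => a1 x + a0 x) ω)^2 = 2^(2*k+1) := by
  set A := walsh a1 ω
  set B := walsh (fun x => a1 x + a0 x) ω
  have hd : (∑ x : Fin n → ZMod 2,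
        Complex.I ^ ((a0 x).val + 2 * (a1 x).val) * (-1 : ℂ) ^ (dotp ω x).val)
      = (1 + I)/2 * ((A:ℝ):ℂ) + (1 - I)/2 * ((B:ℝ):ℂ) := by
    rw [sum_decomp a0 a1 ω]; push_cast; ring
  rw [hd]
  have habs := abs_decomp (A:ℝ) (B:ℝ)
  set c := ‖((1 + I)/2 * ((A:ℝ):ℂ) + (1 - I)/2 * ((B:ℝ):ℂ))‖ with hc
  have hc0 : 0 ≤ c := norm_nonneg _
  constructor
  · intro h
    have h2 : ((A:ℝ)^2 + (B:ℝ)^2)/2 = (2^k)^2 := by rw [← habs, h]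
    have : (A:ℝ)^2 + (B:ℝ)^2 = 2^(2*k+1) := by
      rw [show ((2:ℝ)^(2*k+1)) = (2^k)^2 * 2 by rw [← pow_mul]; ring_nf]
      linarith
    exact_mod_cast this
  · intro h
    have hr : (A:ℝ)^2 + (B:ℝ)^2 = 2^(2*k+1) := by exact_mod_cast h
    have h2 : c^2 = (2^k:ℝ)^2 := by
      rw [habs, hr, show ((2:ℝ)^(2*k+1)) = (2^k)^2 * 2 by rw [← pow_mul]; ring_nf]
      ring
    have : (0:ℝ) ≤ (2:ℝ)^k := by positivity
    nlinarith

lemma int_key : ∀ (k : ℕ) (a b : ℤ), a^2 + b^2 = 2^(2*k+1) →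
    (a = 2^k ∨ a = -(2^k)) ∧ (b = 2^k ∨ b = -(2^k)) := by
  intro k
  induction k with
  | zero =>
    intro a b h
    norm_num at h ⊢
    have ha : a^2 ≤ 2 := by nlinarith [sq_nonneg b]
    have hb : b^2 ≤ 2 := by nlinarith [sq_nonneg a]
    have ha1 : -1 ≤ a ∧ a ≤ 1 := by constructor <;> nlinarith
    have hb1 : -1 ≤ b ∧ b ≤ 1 := by constructor <;> nlinarith
    obtain ⟨h1,h2⟩ := ha1; obtain ⟨h3,h4⟩ := hb1
    interval_cases a <;> interval_cases b <;> omega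
  | succ k ih =>
    intro a b h
    have hR : (2:ℤ)^(2*(k+1)+1) = 4 * 2^(2*k+1) := by ring
    rcases Int.even_or_odd a with ⟨a', rfl⟩ | ⟨a', rfl⟩ <;>
      rcases Int.even_or_odd b with ⟨b', rfl⟩ | ⟨b', rfl⟩
    · -- both even
      have h' : a'^2 + b'^2 = 2^(2*k+1) := by nlinarith [h, hR]
      obtain ⟨ha, hb⟩ := ih a' b' h'
      constructor
      · rcases ha with h1 | h1 <;> [left; right] <;> rw [pow_succ] <;> omega
      · rcases hb with h1 | h1 <;> [left; right] <;> rw [pow_succ] <;> omega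
    · exfalso
      have e1 : (a'+a')^2 = 4*(a'*a') := by ring
      have e2 : (2*b'+1)^2 = 4*(b'*b'+b')+1 := by ring
      rw [hR] at h; omega
    · exfalso
      have e1 : (2*a'+1)^2 = 4*(a'*a'+a')+1 := by ring
      have e2 : (b'+b')^2 = 4*(b'*b') := by ring
      rw [hR] at h; omega
    · exfalso
      have e1 : (2*a'+1)^2 = 4*(a'*a'+a')+1 := by ring
      have e2 : (2*b'+1)^2 = 4*(b'*b'+b')+1 := by ring
      rw [hR] at h; omega

end Helpers

theorem stmt15 (k : ℕ) (a0 a1 : (Fin (2 * k) → ZMod 2) → ZMod 2) :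
    (∀ ω : Fin (2 * k) → ZMod 2,
        ‖(∑ x : Fin (2 * k) → ZMod 2,
            Complex.I ^ ((a0 x).val + 2 * (a1 x).val) * (-1 : ℂ) ^ (dotp ω x).val)‖
          = 2 ^ k)
      ↔ ((∀ ω, walsh a1 ω = 2 ^ k ∨ walsh a1 ω = -(2 ^ k)) ∧
         (∀ ω, walsh (fun x => a1 x + a0 x) ω = 2 ^ k ∨
            walsh (fun x => a1 x + a0 x) ω = -(2 ^ k))) := by
  constructor
  · intro H
    refine ⟨fun ω => ?_, fun ω => ?_⟩
    · exact (int_key k _ _ ((main_equiv k a0 a1 ω).mp (H ω))).1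
    · exact (int_key k _ _ ((main_equiv k a0 a1 ω).mp (H ω))).2
  · rintro ⟨H1, H2⟩ ω
    rw [main_equiv]
    have hp : ((2:ℤ)^(2*k+1)) = (2^k)^2 * 2 := by rw [← pow_mul]; ring_nf
    rcases H1 ω with h | h <;> rcases H2 ω with h' | h' <;> rw [h, h', hp] <;> ring
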